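/- For all n, k ≥ 0, the permanent of the (n+k) × (n+k) 0-1 matrix V with entries v_{ij} = 1 if −k ≤ i − j ≤ n and v_{ij} = 0 otherwise (i, j = 1, …, n+k) equals ∑_{m=0}^{min(n,k)} m! · S(n+1, m+1) · m! · S(k+1, m+1). -/

import Mathlib

open Finset

/-- The Stirling numbers of the second kind. -/
def stirling : ℕ → ℕ → ℕ
  | 0, 0 => 1
  | 0, _ + 1 => 0
  | _ + 1, 0 => 0
  | n + 1, k + 1 => stirling n k + (k + 1) * stirling n (k + 1)

/-- The `(n+k) × (n+k)` 0-1 matrix `V` with `v_{ij} = 1` iff `-k ≤ i - j ≤ n`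
(indices modelled on `Fin (n+k)`, which preserves the differences `i - j`). -/
def vesztMatrix (n k : ℕ) : Fin (n + k) → Fin (n + k) → ℕ :=
  fun i j => if -(k : ℤ) ≤ (i : ℤ) - (j : ℤ) ∧ (i : ℤ) - (j : ℤ) ≤ (n : ℤ) then 1 else 0

namespace Veszt

def InjO {α β : Type*} (f : α → Option β) : Prop :=
  ∀ a a' v, f a = some v → f a' = some v → a = a'

instance {α β : Type*} [Fintype α] [DecidableEq α] [DecidableEq β] (f : α → Option β) :
    Decidable (InjO f) := by unfold InjO; infer_instance

def dnone {α β : Type*} [Fintype α] [DecidableEq β] (f : α → Option β) : ℕ :=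
  (univ.filter fun a => f a = none).card

def ranF {α β : Type*} [Fintype α] [Fintype β] [DecidableEq β] (f : α → Option β) : Finset β :=
  univ.filter fun v => ∃ a, f a = some v

lemma card_ranF_add {α β : Type*} [Fintype α] [DecidableEq α] [Fintype β] [DecidableEq β]
    (f : α → Option β) (hf : InjO f) : (ranF f).card + dnone f = Fintype.card α := by
  have h1 : (univ.filter fun a => (f a).isSome).card = (ranF f).card := by
    apply Finset.card_bij (fun a _ => (f a).get (by
      simp only [Finset.mem_filter] at *; tauto))
    · intro a ha
      simp only [Finset.mem_filter, Finset.mem_univ, true_and] at ha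
      simp only [ranF, Finset.mem_filter, Finset.mem_univ, true_and]
      exact ⟨a, Option.eq_some_of_isSome ha⟩
    · intro a ha a' ha' h
      simp only [Finset.mem_filter, Finset.mem_univ, true_and] at ha ha'
      have h2 := Option.eq_some_of_isSome ha'
      rw [← h] at h2
      exact hf a a' _ (Option.eq_some_of_isSome ha) h2
    · intro v hv
      simp only [ranF, Finset.mem_filter, Finset.mem_univ, true_and] at hv
      obtain ⟨a, ha⟩ := hv
      exact ⟨a, by simp [ha], by simp [ha]⟩
  have h2 := Finset.card_filter_add_card_filter_not (s := (univ : Finset α))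
    (fun a => (f a).isSome)
  have h3 : (univ.filter fun a => ¬ (f a).isSome) = univ.filter (fun a => f a = none) := by
    ext a; simp [Option.not_isSome_iff_eq_none]
  rw [← Finset.card_univ, ← h2, h3, h1, dnone]


/-- bounded-above injective partial self-maps of `Fin n` with `j` undefined entries -/
def Pset (n j : ℕ) : Finset (Fin n → Option (Fin n)) :=
  univ.filter fun φ => (∀ a v, φ a = some v → v ≤ a) ∧ InjO φ ∧ dnone φ = j

lemma mem_Pset {n j : ℕ} {φ : Fin n → Option (Fin n)} :
    φ ∈ Pset n j ↔ (∀ a v, φ a = some v → v ≤ a) ∧ InjO φ ∧ dnone φ = j := by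
  simp [Pset]

def res {n : ℕ} (φ : Fin (n+1) → Option (Fin (n+1))) : Fin n → Option (Fin n) :=
  fun a => (φ a.castSucc).bind (fun v => if h : (v : ℕ) < n then some ⟨v, h⟩ else none)

def extF {n : ℕ} (φ' : Fin n → Option (Fin n)) (o : Option (Fin (n+1))) :
    Fin (n+1) → Option (Fin (n+1)) :=
  fun a => if h : (a : ℕ) < n then (φ' ⟨a, h⟩).map Fin.castSucc else o

lemma extF_last {n : ℕ} (φ' : Fin n → Option (Fin n)) (o : Option (Fin (n+1))) :
    extF φ' o (Fin.last n) = o := by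
  simp [extF]

lemma extF_castSucc {n : ℕ} (φ' : Fin n → Option (Fin n)) (o : Option (Fin (n+1)))
    (a : Fin n) : extF φ' o a.castSucc = (φ' a).map Fin.castSucc := by
  have h : ((a.castSucc : Fin (n+1)) : ℕ) < n := a.isLt
  simp only [extF, dif_pos h]
  have : (⟨((a.castSucc : Fin (n+1)) : ℕ), h⟩ : Fin n) = a := Fin.ext rfl
  rw [this]

lemma res_extF {n : ℕ} (φ' : Fin n → Option (Fin n)) (o : Option (Fin (n+1))) :
    res (extF φ' o) = φ' := by
  funext a
  rw [res, extF_castSucc]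
  cases h : φ' a with
  | none => simp
  | some v =>
    simp only [Option.map_some, Option.bind_some]
    rw [dif_pos (show ((v.castSucc : Fin (n+1)) : ℕ) < n from v.isLt)]
    exact congrArg some (Fin.ext rfl)

lemma eq_extF_of_res {n : ℕ} (φ : Fin (n+1) → Option (Fin (n+1)))
    (hb : ∀ a v, φ a = some v → v ≤ a) :
    φ = extF (res φ) (φ (Fin.last n)) := by
  funext a
  by_cases h : (a : ℕ) < n
  · have ha : a = (⟨(a : ℕ), h⟩ : Fin n).castSucc := Fin.ext rfl
    rw [ha, extF_castSucc, res]
    cases hv : φ (⟨(a : ℕ), h⟩ : Fin n).castSucc with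
    | none => simp
    | some v =>
      have hvn : (v : ℕ) < n := lt_of_le_of_lt (hb _ v hv) (by simpa using h)
      simp only [Option.bind_some, dif_pos hvn, Option.map_some]
      exact congrArg some (Fin.ext rfl)
  · have ha : a = Fin.last n := Fin.ext (by simp only [Fin.val_last]; have := a.isLt; omega)
    rw [ha, extF_last]

lemma extF_injective {n : ℕ} (φ' : Fin n → Option (Fin n)) :
    Function.Injective (extF φ') := by
  intro o o' h
  rw [← extF_last φ' o, ← extF_last φ' o', h]

lemma bounded_extF {n : ℕ} {φ' : Fin n → Option (Fin n)} (o : Option (Fin (n+1)))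
    (hb : ∀ a v, φ' a = some v → v ≤ a) :
    ∀ a v, extF φ' o a = some v → v ≤ a := by
  intro a v h
  by_cases hc : (a : ℕ) < n
  · have ha : a = (⟨(a : ℕ), hc⟩ : Fin n).castSucc := Fin.ext rfl
    rw [ha, extF_castSucc] at h
    cases hv : φ' (⟨(a : ℕ), hc⟩ : Fin n) with
    | none => rw [hv] at h; simp at h
    | some w =>
      rw [hv] at h
      simp only [Option.map_some, Option.some.injEq] at h
      subst h
      have := hb _ _ hv
      rw [ha]
      exact Fin.castSucc_le_castSucc_iff.mpr this
  · have h1 := v.isLt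
    have h2 := a.isLt
    exact Fin.le_def.mpr (by omega)

lemma dnone_extF {n : ℕ} (φ' : Fin n → Option (Fin n)) (o : Option (Fin (n+1))) :
    dnone (extF φ' o) = dnone φ' + (if o = none then 1 else 0) := by
  rw [dnone, dnone, Finset.card_filter, Finset.card_filter, Fin.sum_univ_castSucc]
  congr 1
  · apply Finset.sum_congr rfl
    intro a _
    rw [extF_castSucc]
    by_cases h : φ' a = none <;> simp [h]
  · rw [extF_last]


lemma bounded_of_extF {n : ℕ} {φ' : Fin n → Option (Fin n)} {o : Option (Fin (n+1))}
    (h : ∀ a v, extF φ' o a = some v → v ≤ a) :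
    ∀ a v, φ' a = some v → v ≤ a := by
  intro a v hv
  have h2 : extF φ' o a.castSucc = some v.castSucc := by
    rw [extF_castSucc, hv, Option.map_some]
  exact Fin.castSucc_le_castSucc_iff.mp (h _ _ h2)

lemma injO_of_extF {n : ℕ} {φ' : Fin n → Option (Fin n)} {o : Option (Fin (n+1))}
    (h : InjO (extF φ' o)) : InjO φ' := by
  intro a a' v ha ha'
  have h1 : extF φ' o a.castSucc = some v.castSucc := by
    rw [extF_castSucc, ha, Option.map_some]
  have h2 : extF φ' o a'.castSucc = some v.castSucc := by
    rw [extF_castSucc, ha', Option.map_some]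
  exact Fin.castSucc_injective n (h _ _ _ h1 h2)

lemma fresh_of_extF {n : ℕ} {φ' : Fin n → Option (Fin n)} {o : Option (Fin (n+1))}
    (h : InjO (extF φ' o)) : ∀ v, o = some v → v ∉ (ranF φ').image Fin.castSucc := by
  intro v ho hv
  simp only [Finset.mem_image, ranF, Finset.mem_filter, Finset.mem_univ, true_and] at hv
  obtain ⟨w, ⟨a, ha⟩, hw⟩ := hv
  have h1 : extF φ' o a.castSucc = some v := by
    rw [extF_castSucc, ha, Option.map_some, hw]
  have h2 : extF φ' o (Fin.last n) = some v := by rw [extF_last, ho]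
  have := h _ _ _ h1 h2
  exact absurd this (Fin.ne_of_lt (Fin.castSucc_lt_last a))

lemma injO_extF {n : ℕ} {φ' : Fin n → Option (Fin n)} {o : Option (Fin (n+1))}
    (hinj : InjO φ') (hfresh : ∀ v, o = some v → v ∉ (ranF φ').image Fin.castSucc) :
    InjO (extF φ' o) := by
  intro a a' v ha ha'
  have key : ∀ b : Fin (n+1), extF φ' o b = some v → ¬ ((b : ℕ) < n) → ∀ b' : Fin (n+1),
      extF φ' o b' = some v → (b' : ℕ) < n → False := by
    intro b hb hbn b' hb' hb'n
    have hbl : b = Fin.last n := Fin.ext (by simp only [Fin.val_last]; have := b.isLt; omega)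
    rw [hbl, extF_last] at hb
    have hb'c : b' = (⟨(b' : ℕ), hb'n⟩ : Fin n).castSucc := Fin.ext rfl
    rw [hb'c, extF_castSucc] at hb'
    cases hw : φ' ⟨(b' : ℕ), hb'n⟩ with
    | none => rw [hw] at hb'; simp at hb'
    | some w =>
      rw [hw] at hb'
      simp only [Option.map_some, Option.some.injEq] at hb'
      refine hfresh v hb ?_
      simp only [Finset.mem_image, ranF, Finset.mem_filter, Finset.mem_univ, true_and]
      exact ⟨w, ⟨_, hw⟩, hb'⟩
  by_cases h1 : (a : ℕ) < n <;> by_cases h2 : (a' : ℕ) < n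
  · have hac : a = (⟨(a : ℕ), h1⟩ : Fin n).castSucc := Fin.ext rfl
    have ha'c : a' = (⟨(a' : ℕ), h2⟩ : Fin n).castSucc := Fin.ext rfl
    rw [hac, extF_castSucc] at ha
    rw [ha'c, extF_castSucc] at ha'
    cases hw : φ' ⟨(a : ℕ), h1⟩ with
    | none => rw [hw] at ha; simp at ha
    | some w =>
      cases hw' : φ' ⟨(a' : ℕ), h2⟩ with
      | none => rw [hw'] at ha'; simp at ha'
      | some w' =>
        rw [hw] at ha; rw [hw'] at ha'
        simp only [Option.map_some, Option.some.injEq] at ha ha'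
        have : w = w' := Fin.castSucc_injective n (ha.trans ha'.symm)
        subst this
        have := hinj _ _ _ hw hw'
        rw [hac, ha'c, this]
  · exact absurd (key a' ha' h2 a ha h1) not_false
  · exact absurd (key a ha h1 a' ha' h2) not_false
  · have hal : a = Fin.last n := Fin.ext (by simp only [Fin.val_last]; have := a.isLt; omega)
    have ha'l : a' = Fin.last n := Fin.ext (by simp only [Fin.val_last]; have := a'.isLt; omega)
    rw [hal, ha'l]


lemma fiber_card (n j : ℕ) (φ' : Fin n → Option (Fin n)) :
    ((Pset (n+1) j).filter (fun φ => res φ = φ')).card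
      = (if φ' ∈ Pset n j then j + 1 else 0)
        + (if j ≠ 0 ∧ φ' ∈ Pset n (j-1) then 1 else 0) := by
  have himg : (Pset (n+1) j).filter (fun φ => res φ = φ')
      = (univ.filter (fun o : Option (Fin (n+1)) => extF φ' o ∈ Pset (n+1) j)).image
          (extF φ') := by
    ext φ
    simp only [Finset.mem_filter, Finset.mem_image, Finset.mem_univ, true_and]
    constructor
    · rintro ⟨hP, hr⟩
      refine ⟨φ (Fin.last n), ?_, ?_⟩
      · rw [← hr, ← eq_extF_of_res φ (mem_Pset.mp hP).1]; exact hP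
      · rw [← hr, ← eq_extF_of_res φ (mem_Pset.mp hP).1]
    · rintro ⟨o, ho, rfl⟩
      exact ⟨ho, res_extF φ' o⟩
  rw [himg, Finset.card_image_of_injective _ (extF_injective φ')]
  by_cases hgood : (∀ a v, φ' a = some v → v ≤ a) ∧ InjO φ'
  · obtain ⟨hb, hinj⟩ := hgood
    have hd_le : dnone φ' ≤ n := by
      have := Finset.card_filter_le (univ : Finset (Fin n)) (fun a => φ' a = none)
      simpa [dnone, Finset.card_univ] using this
    have hran : (ranF φ').card + dnone φ' = n := by
      have := card_ranF_add φ' hinj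
      simpa [Fintype.card_fin] using this
    have hmem : ∀ o : Option (Fin (n+1)), (extF φ' o ∈ Pset (n+1) j) ↔
        ((∀ v, o = some v → v ∉ (ranF φ').image Fin.castSucc)
          ∧ dnone φ' + (if o = none then 1 else 0) = j) := by
      intro o
      rw [mem_Pset, dnone_extF]
      constructor
      · rintro ⟨_, hi, hd⟩
        exact ⟨fresh_of_extF hi, hd⟩
      · rintro ⟨hfresh, hd⟩
        exact ⟨bounded_extF o hb, injO_extF hinj hfresh, hd⟩
    rw [Finset.card_filter, Fintype.sum_option]
    have e1 : (if extF φ' none ∈ Pset (n+1) j then (1:ℕ) else 0)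
        = (if j ≠ 0 ∧ φ' ∈ Pset n (j-1) then 1 else 0) := by
      refine if_congr ?_ rfl rfl
      rw [hmem, mem_Pset]
      constructor
      · rintro ⟨-, hd⟩
        have hd' : dnone φ' + 1 = j := by simpa using hd
        exact ⟨by omega, hb, hinj, by omega⟩
      · rintro ⟨hj, -, -, hd⟩
        refine ⟨by simp, ?_⟩
        have : (if (none : Option (Fin (n+1))) = none then 1 else 0) = 1 := by simp
        rw [this]
        omega
    have e2 : ∑ v : Fin (n+1), (if extF φ' (some v) ∈ Pset (n+1) j then (1:ℕ) else 0)
        = if φ' ∈ Pset n j then j + 1 else 0 := by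
      have hiff : ∀ v : Fin (n+1), (extF φ' (some v) ∈ Pset (n+1) j) ↔
          (v ∉ (ranF φ').image Fin.castSucc ∧ dnone φ' = j) := by
        intro v
        rw [hmem]
        constructor
        · rintro ⟨hfresh, hd⟩
          refine ⟨hfresh v rfl, ?_⟩
          have hd' : dnone φ' + 0 = j := by simpa using hd
          omega
        · rintro ⟨hv, hd⟩
          refine ⟨?_, ?_⟩
          · rintro w hw
            rw [Option.some.injEq] at hw
            rwa [← hw]
          · have : (if (some v : Option (Fin (n+1))) = none then 1 else 0) = 0 := by simp
            rw [this]
            omega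
      by_cases hd : dnone φ' = j
      · have hmemP : φ' ∈ Pset n j := mem_Pset.mpr ⟨hb, hinj, hd⟩
        rw [if_pos hmemP]
        have : ∀ v : Fin (n+1), (extF φ' (some v) ∈ Pset (n+1) j) ↔
            v ∈ ((ranF φ').image Fin.castSucc)ᶜ := by
          intro v
          rw [hiff v, Finset.mem_compl]
          exact ⟨fun h => h.1, fun h => ⟨h, hd⟩⟩
        calc ∑ v : Fin (n+1), (if extF φ' (some v) ∈ Pset (n+1) j then (1:ℕ) else 0)
            = ∑ v : Fin (n+1), (if v ∈ ((ranF φ').image Fin.castSucc)ᶜ then (1:ℕ) else 0) := by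
              exact Finset.sum_congr rfl (fun v _ => if_congr (this v) rfl rfl)
          _ = (((ranF φ').image Fin.castSucc)ᶜ).card := by
              rw [← Finset.card_filter]
              congr 1
              ext v
              simp
          _ = j + 1 := by
              rw [Finset.card_compl,
                Finset.card_image_of_injective _ (Fin.castSucc_injective n),
                Fintype.card_fin]
              omega
      · have hmemP : φ' ∉ Pset n j := fun h => hd (mem_Pset.mp h).2.2
        rw [if_neg hmemP]
        apply Finset.sum_eq_zero
        intro v _
        rw [if_neg]
        rw [hiff]
        rintro ⟨-, h⟩
        exact hd h
    rw [e1, e2, Nat.add_comm]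
  · have hempty : ∀ o : Option (Fin (n+1)), extF φ' o ∉ Pset (n+1) j := by
      intro o hP
      rw [mem_Pset] at hP
      exact hgood ⟨bounded_of_extF hP.1, injO_of_extF hP.2.1⟩
    have h0 : (univ.filter (fun o : Option (Fin (n+1)) => extF φ' o ∈ Pset (n+1) j)) = ∅ := by
      apply Finset.filter_false_of_mem
      intro o _
      exact hempty o
    rw [h0]
    have h1 : φ' ∉ Pset n j := fun h => hgood ⟨(mem_Pset.mp h).1, (mem_Pset.mp h).2.1⟩
    have h2 : φ' ∉ Pset n (j-1) := fun h => hgood ⟨(mem_Pset.mp h).1, (mem_Pset.mp h).2.1⟩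
    simp [h1, h2]

lemma Pset_card : ∀ n j : ℕ, (Pset n j).card = stirling (n+1) (j+1) := by
  intro n
  induction n with
  | zero =>
    intro j
    cases j with
    | zero =>
      have : Pset 0 0 = univ := by
        ext φ
        simp only [mem_Pset, Finset.mem_univ, iff_true]
        refine ⟨fun a => a.elim0, fun a => a.elim0, ?_⟩
        simp [dnone]
      rw [this, Finset.card_univ]
      simp [stirling]
    | succ j =>
      have : Pset 0 (j+1) = ∅ := by
        ext φ
        simp only [mem_Pset, Finset.notMem_empty, iff_false]
        rintro ⟨-, -, hd⟩
        rw [dnone] at hd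
        simp at hd
      rw [this, Finset.card_empty]
      simp [stirling]
  | succ n ih =>
    intro j
    rw [Finset.card_eq_sum_card_fiberwise
      (f := res) (t := (univ : Finset (Fin n → Option (Fin n)))) (fun x _ => Finset.mem_univ _)]
    have : ∀ φ' : Fin n → Option (Fin n),
        ((Pset (n+1) j).filter (fun φ => res φ = φ')).card
        = (if φ' ∈ Pset n j then j + 1 else 0)
          + (if j ≠ 0 ∧ φ' ∈ Pset n (j-1) then 1 else 0) := fun φ' => fiber_card n j φ'
    rw [Finset.sum_congr rfl (fun φ' _ => this φ')]
    rw [Finset.sum_add_distrib]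
    have t1 : ∑ φ' : Fin n → Option (Fin n), (if φ' ∈ Pset n j then j + 1 else 0)
        = (j+1) * stirling (n+1) (j+1) := by
      rw [Finset.sum_ite_mem, Finset.univ_inter, Finset.sum_const, smul_eq_mul, ih j, Nat.mul_comm]
    cases j with
    | zero =>
      have t2 : ∑ φ' : Fin n → Option (Fin n),
          (if (0 ≠ 0 ∧ φ' ∈ Pset n (0-1)) then (1:ℕ) else 0) = 0 := by
        apply Finset.sum_eq_zero
        intro φ' _
        simp
      rw [t1, t2]
      show 1 * stirling (n+1) 1 + 0 = stirling (n+1+1) (0+1)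
      have h5 : stirling (n+1+1) (0+1) = stirling (n+1) 0 + (0+1) * stirling (n+1) (0+1) := rfl
      have h6 : stirling (n+1) 0 = 0 := rfl
      rw [h5, h6]
      ring
    | succ j =>
      have t2 : ∑ φ' : Fin n → Option (Fin n),
          (if (j+1 ≠ 0 ∧ φ' ∈ Pset n (j+1-1)) then (1:ℕ) else 0)
          = stirling (n+1) (j+1) := by
        have : ∀ φ' : Fin n → Option (Fin n),
            (if (j+1 ≠ 0 ∧ φ' ∈ Pset n (j+1-1)) then (1:ℕ) else 0)
            = (if φ' ∈ Pset n j then (1:ℕ) else 0) := by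
          intro φ'
          refine if_congr ?_ rfl rfl
          simp
        rw [Finset.sum_congr rfl (fun φ' _ => this φ')]
        rw [Finset.sum_ite_mem, Finset.univ_inter, Finset.sum_const, smul_eq_mul, ih j,
          Nat.mul_one]
      rw [t1, t2]
      have : stirling (n+1+1) (j+1+1) = stirling (n+1) (j+1) + (j+1+1) * stirling (n+1) (j+1+1) := rfl
      rw [this]
      ring


/-- bounded-below injective partial self-maps of `Fin k` -/
def Qset (k j : ℕ) : Finset (Fin k → Option (Fin k)) :=
  univ.filter fun ψ => (∀ b s, ψ b = some s → b ≤ s) ∧ InjO ψ ∧ dnone ψ = j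

lemma mem_Qset {k j : ℕ} {ψ : Fin k → Option (Fin k)} :
    ψ ∈ Qset k j ↔ (∀ b s, ψ b = some s → b ≤ s) ∧ InjO ψ ∧ dnone ψ = j := by
  simp [Qset]

def trev {m : ℕ} (f : Fin m → Option (Fin m)) : Fin m → Option (Fin m) :=
  fun a => (f a.rev).map Fin.rev

lemma trev_trev {m : ℕ} (f : Fin m → Option (Fin m)) : trev (trev f) = f := by
  funext a
  simp only [trev, Fin.rev_rev]
  cases f a <;> simp [Fin.rev_rev]

lemma trev_none_iff {m : ℕ} (f : Fin m → Option (Fin m)) (a : Fin m) :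
    trev f a = none ↔ f a.rev = none := by
  simp only [trev]
  cases f a.rev <;> simp

lemma dnone_trev {m : ℕ} (f : Fin m → Option (Fin m)) : dnone (trev f) = dnone f := by
  rw [dnone, dnone]
  apply Finset.card_bij (fun a _ => a.rev)
  · intro a ha
    simp only [Finset.mem_filter, Finset.mem_univ, true_and] at ha ⊢
    exact (trev_none_iff f a).mp ha
  · intro a _ a' _ h
    exact Fin.rev_injective h
  · intro b hb
    simp only [Finset.mem_filter, Finset.mem_univ, true_and] at hb
    exact ⟨b.rev, by simp only [Finset.mem_filter, Finset.mem_univ, true_and,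
      trev_none_iff, Fin.rev_rev]; exact hb, Fin.rev_rev b⟩

lemma trev_some_iff {m : ℕ} (f : Fin m → Option (Fin m)) (a v : Fin m) :
    trev f a = some v ↔ f a.rev = some v.rev := by
  simp only [trev]
  cases hv : f a.rev with
  | none => simp
  | some w =>
    simp only [Option.map_some, Option.some.injEq]
    constructor
    · rintro rfl; rw [Fin.rev_rev]
    · intro h; rw [h, Fin.rev_rev]

lemma injO_trev {m : ℕ} {f : Fin m → Option (Fin m)} (hf : InjO f) : InjO (trev f) := by
  intro a a' v ha ha'
  rw [trev_some_iff] at ha ha'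
  exact Fin.rev_injective (hf _ _ _ ha ha')

lemma mem_Pset_trev {m j : ℕ} {ψ : Fin m → Option (Fin m)} (h : ψ ∈ Qset m j) :
    trev ψ ∈ Pset m j := by
  rw [mem_Qset] at h
  obtain ⟨hb, hi, hd⟩ := h
  refine mem_Pset.mpr ⟨?_, injO_trev hi, by rw [dnone_trev]; exact hd⟩
  intro a v hv
  rw [trev_some_iff] at hv
  exact Fin.rev_le_rev.mp (hb _ _ hv)

lemma mem_Qset_trev {m j : ℕ} {φ : Fin m → Option (Fin m)} (h : φ ∈ Pset m j) :
    trev φ ∈ Qset m j := by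
  rw [mem_Pset] at h
  obtain ⟨hb, hi, hd⟩ := h
  refine mem_Qset.mpr ⟨?_, injO_trev hi, by rw [dnone_trev]; exact hd⟩
  intro b s hs
  rw [trev_some_iff] at hs
  exact Fin.rev_le_rev.mp (hb _ _ hs)

lemma Qset_card (k j : ℕ) : (Qset k j).card = stirling (k+1) (j+1) := by
  rw [← Pset_card k j]
  apply Finset.card_bij (fun ψ _ => trev ψ)
  · intro ψ hψ
    exact mem_Pset_trev hψ
  · intro ψ _ ψ' _ h
    have := congrArg trev h
    rwa [trev_trev, trev_trev] at this
  · intro φ hφ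
    exact ⟨trev φ, mem_Qset_trev hφ, trev_trev φ⟩

def Cond {n k : ℕ} (τ : (Fin n ⊕ Fin k) ≃ (Fin k ⊕ Fin n)) : Prop :=
  (∀ a ℓ, τ (Sum.inl a) = Sum.inr ℓ → (ℓ : ℕ) ≤ (a : ℕ))
    ∧ (∀ b s, τ (Sum.inr b) = Sum.inl s → (b : ℕ) ≤ (s : ℕ))

instance {n k : ℕ} (τ : (Fin n ⊕ Fin k) ≃ (Fin k ⊕ Fin n)) : Decidable (Cond τ) := by
  unfold Cond; infer_instance

def clL {n k : ℕ} (τ : (Fin n ⊕ Fin k) ≃ (Fin k ⊕ Fin n)) : Fin n → Option (Fin n) :=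
  fun a => (τ (Sum.inl a)).getRight?

def clR {n k : ℕ} (τ : (Fin n ⊕ Fin k) ≃ (Fin k ⊕ Fin n)) : Fin k → Option (Fin k) :=
  fun b => (τ (Sum.inr b)).getLeft?

lemma clL_some_iff {n k : ℕ} {τ : (Fin n ⊕ Fin k) ≃ (Fin k ⊕ Fin n)} {a : Fin n} {ℓ : Fin n} :
    clL τ a = some ℓ ↔ τ (Sum.inl a) = Sum.inr ℓ := Sum.getRight?_eq_some_iff

lemma clR_some_iff {n k : ℕ} {τ : (Fin n ⊕ Fin k) ≃ (Fin k ⊕ Fin n)} {b : Fin k} {s : Fin k} :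
    clR τ b = some s ↔ τ (Sum.inr b) = Sum.inl s := Sum.getLeft?_eq_some_iff

lemma injO_clL {n k : ℕ} (τ : (Fin n ⊕ Fin k) ≃ (Fin k ⊕ Fin n)) : InjO (clL τ) := by
  intro a a' v ha ha'
  rw [clL_some_iff] at ha ha'
  exact Sum.inl_injective (τ.injective (ha.trans ha'.symm))

lemma injO_clR {n k : ℕ} (τ : (Fin n ⊕ Fin k) ≃ (Fin k ⊕ Fin n)) : InjO (clR τ) := by
  intro b b' v hb hb'
  rw [clR_some_iff] at hb hb'
  exact Sum.inr_injective (τ.injective (hb.trans hb'.symm))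

lemma cross_card {n k : ℕ} (τ : (Fin n ⊕ Fin k) ≃ (Fin k ⊕ Fin n)) :
    dnone (clL τ) + (ranF (clR τ)).card = k := by
  have hbij : (univ.filter (fun a : Fin n => clL τ a = none)).card
      = ((ranF (clR τ))ᶜ).card := by
    apply Finset.card_bij (fun a ha => (τ (Sum.inl a)).getLeft (by
      simp only [Finset.mem_filter, Finset.mem_univ, true_and] at ha
      exact Sum.getRight?_eq_none_iff.mp ha))
    · intro a ha
      simp only [Finset.mem_compl, ranF, Finset.mem_filter, Finset.mem_univ, true_and,
        not_exists]
      intro b hb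
      rw [clR_some_iff] at hb
      rw [Sum.inl_getLeft] at hb
      exact Sum.inl_ne_inr (τ.injective hb).symm
    · intro a ha a' ha' h
      have e1 := (Sum.inl_getLeft (τ (Sum.inl a)) (by
        simp only [Finset.mem_filter, Finset.mem_univ, true_and] at ha
        exact Sum.getRight?_eq_none_iff.mp ha)).symm
      rw [h, Sum.inl_getLeft] at e1
      exact Sum.inl_injective (τ.injective e1)
    · intro s hs
      simp only [Finset.mem_compl, ranF, Finset.mem_filter, Finset.mem_univ, true_and,
        not_exists] at hs
      cases hx : τ.symm (Sum.inl s) with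
      | inl a =>
        have hτ : τ (Sum.inl a) = Sum.inl s := by rw [← hx, Equiv.apply_symm_apply]
        refine ⟨a, ?_, ?_⟩
        · simp only [Finset.mem_filter, Finset.mem_univ, true_and, clL, hτ]
          simp [hτ]
        · exact Sum.inl_injective ((Sum.inl_getLeft _ _).trans hτ)
      | inr b =>
        have hτ : τ (Sum.inr b) = Sum.inl s := by rw [← hx, Equiv.apply_symm_apply]
        exact absurd (clR_some_iff.mpr hτ) (hs b)
  rw [dnone, hbij, Finset.card_compl, Fintype.card_fin]
  have : (ranF (clR τ)).card ≤ k := by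
    simpa using Finset.card_le_univ (ranF (clR τ))
  omega

def mkF {n k : ℕ} (φ : Fin n → Option (Fin n)) (ψ : Fin k → Option (Fin k))
    (u : {a : Fin n // φ a = none} → {s : Fin k // ∀ b, ψ b ≠ some s})
    (v : {b : Fin k // ψ b = none} → {ℓ : Fin n // ∀ a, φ a ≠ some ℓ}) :
    Fin n ⊕ Fin k → Fin k ⊕ Fin n := fun x =>
  match x with
  | Sum.inl a =>
    if h : (φ a).isSome then Sum.inr ((φ a).get h)
    else Sum.inl (u ⟨a, Option.not_isSome_iff_eq_none.mp h⟩).1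
  | Sum.inr b =>
    if h : (ψ b).isSome then Sum.inl ((ψ b).get h)
    else Sum.inr (v ⟨b, Option.not_isSome_iff_eq_none.mp h⟩).1

variable {n k : ℕ} {φ : Fin n → Option (Fin n)} {ψ : Fin k → Option (Fin k)}
  {u : {a : Fin n // φ a = none} → {s : Fin k // ∀ b, ψ b ≠ some s}}
  {v : {b : Fin k // ψ b = none} → {ℓ : Fin n // ∀ a, φ a ≠ some ℓ}}

lemma mkF_inl_some {a ℓ} (h : φ a = some ℓ) : mkF φ ψ u v (Sum.inl a) = Sum.inr ℓ := by
  simp [mkF, h]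

lemma mkF_inl_none {a} (h : φ a = none) :
    mkF φ ψ u v (Sum.inl a) = Sum.inl (u ⟨a, h⟩).1 := by
  simp [mkF, h]

lemma mkF_inr_some {b s} (h : ψ b = some s) : mkF φ ψ u v (Sum.inr b) = Sum.inl s := by
  simp [mkF, h]

lemma mkF_inr_none {b} (h : ψ b = none) :
    mkF φ ψ u v (Sum.inr b) = Sum.inr (v ⟨b, h⟩).1 := by
  simp [mkF, h]

lemma mkF_injective (hφ : InjO φ) (hψ : InjO ψ)
    (hu : Function.Injective u) (hv : Function.Injective v) :
    Function.Injective (mkF φ ψ u v) := by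
  rintro (a | b) (a' | b') hxy
  · cases ha : φ a with
    | some ℓ =>
      cases ha' : φ a' with
      | some ℓ' =>
        rw [mkF_inl_some ha, mkF_inl_some ha'] at hxy
        have hll : ℓ = ℓ' := Sum.inr_injective hxy
        subst hll
        exact congrArg Sum.inl (hφ _ _ _ ha ha')
      | none =>
        rw [mkF_inl_some ha, mkF_inl_none ha'] at hxy
        exact absurd hxy (by simp)
    | none =>
      cases ha' : φ a' with
      | some ℓ' =>
        rw [mkF_inl_none ha, mkF_inl_some ha'] at hxy
        exact absurd hxy (by simp)
      | none =>
        rw [mkF_inl_none ha, mkF_inl_none ha'] at hxy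
        have := hu (Subtype.ext (Sum.inl_injective hxy))
        exact congrArg Sum.inl (congrArg Subtype.val this)
  · cases ha : φ a with
    | some ℓ =>
      cases hb : ψ b' with
      | some s =>
        rw [mkF_inl_some ha, mkF_inr_some hb] at hxy
        exact absurd hxy (by simp)
      | none =>
        rw [mkF_inl_some ha, mkF_inr_none hb] at hxy
        have hll := Sum.inr_injective hxy
        rw [hll] at ha
        exact absurd ha ((v ⟨b', hb⟩).2 a)
    | none =>
      cases hb : ψ b' with
      | some s =>
        rw [mkF_inl_none ha, mkF_inr_some hb] at hxy
        have hss := Sum.inl_injective hxy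
        rw [← hss] at hb
        exact absurd hb ((u ⟨a, ha⟩).2 b')
      | none =>
        rw [mkF_inl_none ha, mkF_inr_none hb] at hxy
        exact absurd hxy (by simp)
  · cases hb : ψ b with
    | some s =>
      cases ha : φ a' with
      | some ℓ =>
        rw [mkF_inr_some hb, mkF_inl_some ha] at hxy
        exact absurd hxy (by simp)
      | none =>
        rw [mkF_inr_some hb, mkF_inl_none ha] at hxy
        have hss := Sum.inl_injective hxy
        rw [hss] at hb
        exact absurd hb ((u ⟨a', ha⟩).2 b)
    | none =>
      cases ha : φ a' with
      | some ℓ =>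
        rw [mkF_inr_none hb, mkF_inl_some ha] at hxy
        have hll := Sum.inr_injective hxy
        rw [← hll] at ha
        exact absurd ha ((v ⟨b, hb⟩).2 a')
      | none =>
        rw [mkF_inr_none hb, mkF_inl_none ha] at hxy
        exact absurd hxy (by simp)
  · cases hb : ψ b with
    | some s =>
      cases hb' : ψ b' with
      | some s' =>
        rw [mkF_inr_some hb, mkF_inr_some hb'] at hxy
        have hss : s = s' := Sum.inl_injective hxy
        subst hss
        exact congrArg Sum.inr (hψ _ _ _ hb hb')
      | none =>
        rw [mkF_inr_some hb, mkF_inr_none hb'] at hxy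
        exact absurd hxy (by simp)
    | none =>
      cases hb' : ψ b' with
      | some s' =>
        rw [mkF_inr_none hb, mkF_inr_some hb'] at hxy
        exact absurd hxy (by simp)
      | none =>
        rw [mkF_inr_none hb, mkF_inr_none hb'] at hxy
        have := hv (Subtype.ext (Sum.inr_injective hxy))
        exact congrArg Sum.inr (congrArg Subtype.val this)

lemma card_sum_comm : Fintype.card (Fin n ⊕ Fin k) = Fintype.card (Fin k ⊕ Fin n) := by
  simp [Nat.add_comm]

noncomputable def mkTau (hφ : InjO φ) (hψ : InjO ψ)
    (uv : ({a : Fin n // φ a = none} ≃ {s : Fin k // ∀ b, ψ b ≠ some s})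
      × ({b : Fin k // ψ b = none} ≃ {ℓ : Fin n // ∀ a, φ a ≠ some ℓ})) :
    (Fin n ⊕ Fin k) ≃ (Fin k ⊕ Fin n) :=
  Equiv.ofBijective (mkF φ ψ (fun p => uv.1 p) (fun p => uv.2 p))
    ((Fintype.bijective_iff_injective_and_card _).mpr
      ⟨mkF_injective hφ hψ
        (fun p p' h => uv.1.injective h) (fun p p' h => uv.2.injective h), card_sum_comm⟩)

lemma mkTau_apply (hφ : InjO φ) (hψ : InjO ψ) (uv) (x) :
    mkTau hφ hψ uv x = mkF φ ψ (fun p => uv.1 p) (fun p => uv.2 p) x := rfl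

lemma clL_mkTau (hφ : InjO φ) (hψ : InjO ψ) (uv) : clL (mkTau hφ hψ uv) = φ := by
  funext a
  rw [clL, mkTau_apply]
  cases h : φ a with
  | some ℓ => rw [mkF_inl_some h]; rfl
  | none => rw [mkF_inl_none h]; rfl

lemma clR_mkTau (hφ : InjO φ) (hψ : InjO ψ) (uv) : clR (mkTau hφ hψ uv) = ψ := by
  funext b
  rw [clR, mkTau_apply]
  cases h : ψ b with
  | some s => rw [mkF_inr_some h]; rfl
  | none => rw [mkF_inr_none h]; rfl

lemma theta_bijective (hφ : InjO φ) (hψ : InjO ψ) :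
    Function.Bijective
      (fun uv : ({a : Fin n // φ a = none} ≃ {s : Fin k // ∀ b, ψ b ≠ some s})
          × ({b : Fin k // ψ b = none} ≃ {ℓ : Fin n // ∀ a, φ a ≠ some ℓ}) =>
        (⟨mkTau hφ hψ uv, clL_mkTau hφ hψ uv, clR_mkTau hφ hψ uv⟩ :
          {τ : (Fin n ⊕ Fin k) ≃ (Fin k ⊕ Fin n) // clL τ = φ ∧ clR τ = ψ})) := by
  constructor
  · intro uv uv' h
    have h2 : mkTau hφ hψ uv = mkTau hφ hψ uv' := congrArg Subtype.val h
    have hpt : ∀ x, mkTau hφ hψ uv x = mkTau hφ hψ uv' x := fun x => by rw [h2]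
    have hu : uv.1 = uv'.1 := by
      apply Equiv.ext
      rintro ⟨a, ha⟩
      have := hpt (Sum.inl a)
      rw [mkTau_apply, mkTau_apply, mkF_inl_none ha, mkF_inl_none ha] at this
      exact Subtype.ext (Sum.inl_injective this)
    have hv : uv.2 = uv'.2 := by
      apply Equiv.ext
      rintro ⟨b, hb⟩
      have := hpt (Sum.inr b)
      rw [mkTau_apply, mkTau_apply, mkF_inr_none hb, mkF_inr_none hb] at this
      exact Subtype.ext (Sum.inr_injective this)
    exact Prod.ext hu hv
  · rintro ⟨τ, hL, hR⟩
    -- extract u₀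
    have hAleft : ∀ a : Fin n, φ a = none → (τ (Sum.inl a)).isLeft := by
      intro a ha
      apply Sum.getRight?_eq_none_iff.mp
      show clL τ a = none
      rw [hL]; exact ha
    have hBright : ∀ b : Fin k, ψ b = none → (τ (Sum.inr b)).isRight := by
      intro b hb
      apply Sum.getLeft?_eq_none_iff.mp
      show clR τ b = none
      rw [hR]; exact hb
    set u₀ : {a : Fin n // φ a = none} → {s : Fin k // ∀ b, ψ b ≠ some s} :=
      fun p => ⟨(τ (Sum.inl p.1)).getLeft (hAleft p.1 p.2), by
        intro b hb
        have h1 : τ (Sum.inr b) = Sum.inl ((τ (Sum.inl p.1)).getLeft (hAleft p.1 p.2)) := by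
          apply clR_some_iff.mp
          rw [hR]; exact hb
        rw [Sum.inl_getLeft] at h1
        exact Sum.inl_ne_inr (τ.injective h1).symm⟩ with hu₀
    set v₀ : {b : Fin k // ψ b = none} → {ℓ : Fin n // ∀ a, φ a ≠ some ℓ} :=
      fun p => ⟨(τ (Sum.inr p.1)).getRight (hBright p.1 p.2), by
        intro a ha
        have h1 : τ (Sum.inl a) = Sum.inr ((τ (Sum.inr p.1)).getRight (hBright p.1 p.2)) := by
          apply clL_some_iff.mp
          rw [hL]; exact ha
        rw [Sum.inr_getRight] at h1
        exact Sum.inl_ne_inr (τ.injective h1)⟩ with hv₀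
    have hu₀inj : Function.Injective u₀ := by
      rintro ⟨a, ha⟩ ⟨a', ha'⟩ h
      have h1 := Sum.inl_getLeft (τ (Sum.inl a)) (hAleft a ha)
      have h2 := Sum.inl_getLeft (τ (Sum.inl a')) (hAleft a' ha')
      have h3 : (τ (Sum.inl a)).getLeft (hAleft a ha)
          = (τ (Sum.inl a')).getLeft (hAleft a' ha') := congrArg Subtype.val h
      rw [h3] at h1
      exact Subtype.ext (Sum.inl_injective (τ.injective (h1.symm.trans h2)))
    have hu₀surj : Function.Surjective u₀ := by
      rintro ⟨s, hs⟩
      cases hx : τ.symm (Sum.inl s) with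
      | inl a =>
        have hτ : τ (Sum.inl a) = Sum.inl s := by rw [← hx, Equiv.apply_symm_apply]
        have ha : φ a = none := by
          rw [← hL]
          show (τ (Sum.inl a)).getRight? = none
          rw [hτ]; rfl
        refine ⟨⟨a, ha⟩, Subtype.ext ?_⟩
        show (τ (Sum.inl a)).getLeft _ = s
        exact Sum.inl_injective ((Sum.inl_getLeft _ _).trans hτ)
      | inr b =>
        have hτ : τ (Sum.inr b) = Sum.inl s := by rw [← hx, Equiv.apply_symm_apply]
        have : ψ b = some s := by rw [← hR]; exact clR_some_iff.mpr hτ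
        exact absurd this (hs b)
    have hv₀inj : Function.Injective v₀ := by
      rintro ⟨b, hb⟩ ⟨b', hb'⟩ h
      have h1 := Sum.inr_getRight (τ (Sum.inr b)) (hBright b hb)
      have h2 := Sum.inr_getRight (τ (Sum.inr b')) (hBright b' hb')
      have h3 : (τ (Sum.inr b)).getRight (hBright b hb)
          = (τ (Sum.inr b')).getRight (hBright b' hb') := congrArg Subtype.val h
      rw [h3] at h1
      exact Subtype.ext (Sum.inr_injective (τ.injective (h1.symm.trans h2)))
    have hv₀surj : Function.Surjective v₀ := by
      rintro ⟨ℓ, hℓ⟩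
      cases hx : τ.symm (Sum.inr ℓ) with
      | inr b =>
        have hτ : τ (Sum.inr b) = Sum.inr ℓ := by rw [← hx, Equiv.apply_symm_apply]
        have hb : ψ b = none := by
          rw [← hR]
          show (τ (Sum.inr b)).getLeft? = none
          rw [hτ]; rfl
        refine ⟨⟨b, hb⟩, Subtype.ext ?_⟩
        show (τ (Sum.inr b)).getRight _ = ℓ
        exact Sum.inr_injective ((Sum.inr_getRight _ _).trans hτ)
      | inl a =>
        have hτ : τ (Sum.inl a) = Sum.inr ℓ := by rw [← hx, Equiv.apply_symm_apply]
        have : φ a = some ℓ := by rw [← hL]; exact clL_some_iff.mpr hτ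
        exact absurd this (hℓ a)
    refine ⟨(Equiv.ofBijective u₀ ⟨hu₀inj, hu₀surj⟩, Equiv.ofBijective v₀ ⟨hv₀inj, hv₀surj⟩),
      Subtype.ext ?_⟩
    apply Equiv.ext
    rintro (a | b)
    · rw [mkTau_apply]
      cases ha : φ a with
      | some ℓ =>
        rw [mkF_inl_some ha]
        symm
        apply clL_some_iff.mp
        rw [hL]; exact ha
      | none =>
        rw [mkF_inl_none ha]
        exact Sum.inl_getLeft _ _
    · rw [mkTau_apply]
      cases hb : ψ b with
      | some s =>
        rw [mkF_inr_some hb]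
        symm
        apply clR_some_iff.mp
        rw [hR]; exact hb
      | none =>
        rw [mkF_inr_none hb]
        exact Sum.inr_getRight _ _

lemma cond_fiber_card (hφ : InjO φ) (hψ : InjO ψ) (hd : dnone φ = dnone ψ) :
    ((univ : Finset ((Fin n ⊕ Fin k) ≃ (Fin k ⊕ Fin n))).filter
      (fun τ => clL τ = φ ∧ clR τ = ψ)).card = (dnone φ).factorial * (dnone φ).factorial := by
  rw [← Fintype.card_subtype, ← Fintype.card_of_bijective (theta_bijective hφ hψ),
    Fintype.card_prod]
  have cA : Fintype.card {a : Fin n // φ a = none} = dnone φ := by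
    rw [Fintype.card_subtype]; rfl
  have cB : Fintype.card {b : Fin k // ψ b = none} = dnone ψ := by
    rw [Fintype.card_subtype]; rfl
  have cS : Fintype.card {s : Fin k // ∀ b, ψ b ≠ some s} = dnone ψ := by
    rw [Fintype.card_subtype]
    have he : (univ.filter (fun s : Fin k => ∀ b, ψ b ≠ some s)) = (ranF ψ)ᶜ := by
      ext s; simp [ranF]
    rw [he, Finset.card_compl, Fintype.card_fin]
    have h2 := card_ranF_add ψ hψ
    rw [Fintype.card_fin] at h2
    omega
  have cL : Fintype.card {ℓ : Fin n // ∀ a, φ a ≠ some ℓ} = dnone φ := by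
    rw [Fintype.card_subtype]
    have he : (univ.filter (fun ℓ : Fin n => ∀ a, φ a ≠ some ℓ)) = (ranF φ)ᶜ := by
      ext ℓ; simp [ranF]
    rw [he, Finset.card_compl, Fintype.card_fin]
    have h2 := card_ranF_add φ hφ
    rw [Fintype.card_fin] at h2
    omega
  rw [Fintype.card_equiv (Fintype.equivOfCardEq (by rw [cA, cS, hd]))]
  rw [Fintype.card_equiv (Fintype.equivOfCardEq (by rw [cB, cL, hd]))]
  rw [cA, cB, ← hd]

lemma cond_of_bounds {τ : (Fin n ⊕ Fin k) ≃ (Fin k ⊕ Fin n)}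
    (h1 : ∀ a ℓ, clL τ a = some ℓ → ℓ ≤ a) (h2 : ∀ b s, clR τ b = some s → b ≤ s) :
    Cond τ := by
  constructor
  · intro a ℓ h
    exact h1 a ℓ (clL_some_iff.mpr h)
  · intro b s h
    exact h2 b s (clR_some_iff.mpr h)

lemma bounds_of_cond {τ : (Fin n ⊕ Fin k) ≃ (Fin k ⊕ Fin n)} (h : Cond τ) :
    (∀ a ℓ, clL τ a = some ℓ → ℓ ≤ a) ∧ (∀ b s, clR τ b = some s → b ≤ s) := by
  constructor
  · intro a ℓ hs
    exact h.1 a ℓ (clL_some_iff.mp hs)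
  · intro b s hs
    exact h.2 b s (clR_some_iff.mp hs)

lemma dnone_clL_eq_clR (τ : (Fin n ⊕ Fin k) ≃ (Fin k ⊕ Fin n)) :
    dnone (clL τ) = dnone (clR τ) := by
  have h1 := cross_card τ
  have h2 := card_ranF_add (clR τ) (injO_clR τ)
  rw [Fintype.card_fin] at h2
  omega

lemma good_card (n k : ℕ) :
    ((univ : Finset ((Fin n ⊕ Fin k) ≃ (Fin k ⊕ Fin n))).filter Cond).card
      = ∑ j ∈ Finset.range (min n k + 1),
          (Pset n j).card * (Qset k j).card * (j.factorial * j.factorial) := by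
  have hmaps : ∀ τ ∈ (univ : Finset ((Fin n ⊕ Fin k) ≃ (Fin k ⊕ Fin n))).filter Cond,
      (clL τ, clR τ) ∈ (Finset.range (min n k + 1)).biUnion
        (fun j => Pset n j ×ˢ Qset k j) := by
    intro τ hτ
    rw [Finset.mem_filter] at hτ
    obtain ⟨hbL, hbR⟩ := bounds_of_cond hτ.2
    rw [Finset.mem_biUnion]
    refine ⟨dnone (clL τ), ?_, ?_⟩
    · rw [Finset.mem_range]
      have h1 : dnone (clL τ) ≤ n := by
        have := Finset.card_le_univ (univ.filter (fun a : Fin n => clL τ a = none))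
        simpa [dnone] using this
      have h2 : dnone (clR τ) ≤ k := by
        have := Finset.card_le_univ (univ.filter (fun b : Fin k => clR τ b = none))
        simpa [dnone] using this
      have h3 := dnone_clL_eq_clR τ
      omega
    · rw [Finset.mem_product]
      exact ⟨mem_Pset.mpr ⟨hbL, injO_clL τ, rfl⟩,
        mem_Qset.mpr ⟨hbR, injO_clR τ, (dnone_clL_eq_clR τ).symm⟩⟩
  rw [Finset.card_eq_sum_card_fiberwise hmaps]
  rw [Finset.sum_biUnion (by
    intro j _ j' _ hne
    refine Finset.disjoint_left.mpr ?_
    intro p hp hp'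
    rw [Finset.mem_product] at hp hp'
    exact hne ((mem_Pset.mp hp.1).2.2.symm.trans (mem_Pset.mp hp'.1).2.2))]
  apply Finset.sum_congr rfl
  intro j _
  have hfib : ∀ p ∈ Pset n j ×ˢ Qset k j,
      (((univ : Finset ((Fin n ⊕ Fin k) ≃ (Fin k ⊕ Fin n))).filter Cond).filter
        (fun τ => (clL τ, clR τ) = p)).card = j.factorial * j.factorial := by
    intro p hp
    rw [Finset.mem_product] at hp
    obtain ⟨hp1, hp2⟩ := hp
    have e1 : ((univ : Finset ((Fin n ⊕ Fin k) ≃ (Fin k ⊕ Fin n))).filter Cond).filter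
        (fun τ => (clL τ, clR τ) = p)
        = (univ : Finset ((Fin n ⊕ Fin k) ≃ (Fin k ⊕ Fin n))).filter
            (fun τ => clL τ = p.1 ∧ clR τ = p.2) := by
      rw [Finset.filter_filter]
      apply Finset.filter_congr
      intro τ _
      constructor
      · rintro ⟨-, h⟩
        rw [Prod.ext_iff] at h
        exact h
      · rintro ⟨h1, h2⟩
        refine ⟨cond_of_bounds ?_ ?_, by rw [h1, h2]⟩
        · rw [h1]; exact (mem_Pset.mp hp1).1
        · rw [h2]; exact (mem_Qset.mp hp2).1
    rw [e1, cond_fiber_card (mem_Pset.mp hp1).2.1 (mem_Qset.mp hp2).2.1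
      (by rw [(mem_Pset.mp hp1).2.2, (mem_Qset.mp hp2).2.2]), (mem_Pset.mp hp1).2.2]
  rw [Finset.sum_congr rfl hfib, Finset.sum_const, smul_eq_mul, Finset.card_product,
    mul_assoc]

/-! ### From the permanent to the count of constrained bijections -/

def posE (n k : ℕ) : (Fin n ⊕ Fin k) ≃ Fin (n + k) := finSumFinEquiv

def valE (n k : ℕ) : (Fin k ⊕ Fin n) ≃ Fin (n + k) :=
  finSumFinEquiv.trans (finCongr (Nat.add_comm k n))

lemma posE_inl (n k : ℕ) (a : Fin n) : ((posE n k (Sum.inl a)) : ℕ) = a := by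
  simp [posE]

lemma posE_inr (n k : ℕ) (b : Fin k) : ((posE n k (Sum.inr b)) : ℕ) = n + b := by
  simp [posE]

lemma valE_inl (n k : ℕ) (s : Fin k) : ((valE n k (Sum.inl s)) : ℕ) = s := by
  simp [valE]

lemma valE_inr (n k : ℕ) (ℓ : Fin n) : ((valE n k (Sum.inr ℓ)) : ℕ) = k + ℓ := by
  simp [valE, Nat.add_comm]

noncomputable def baseE (n k : ℕ) :
    Equiv.Perm (Fin (n + k)) ≃ ((Fin n ⊕ Fin k) ≃ (Fin k ⊕ Fin n)) :=
  Equiv.equivCongr (posE n k).symm (valE n k).symm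

lemma baseE_apply (n k : ℕ) (σ : Equiv.Perm (Fin (n + k))) (x : Fin n ⊕ Fin k) :
    baseE n k σ x = (valE n k).symm (σ (posE n k x)) := rfl

lemma cond_iff (n k : ℕ) (σ : Equiv.Perm (Fin (n + k))) :
    (∀ i : Fin (n + k), -(k : ℤ) ≤ (i : ℤ) - ((σ i : Fin (n+k)) : ℤ)
        ∧ (i : ℤ) - ((σ i : Fin (n+k)) : ℤ) ≤ (n : ℤ))
      ↔ Cond (baseE n k σ) := by
  constructor
  · intro hQ
    constructor
    · intro a ℓ h
      rw [baseE_apply, Equiv.symm_apply_eq] at h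
      have hv : ((σ (posE n k (Sum.inl a)) : Fin (n+k)) : ℕ) = k + ℓ := by
        rw [h, valE_inr]
      have hq := hQ (posE n k (Sum.inl a))
      rw [posE_inl] at hq  -- may not rewrite coercions; handle below
      omega
    · intro b s h
      rw [baseE_apply, Equiv.symm_apply_eq] at h
      have hv : ((σ (posE n k (Sum.inr b)) : Fin (n+k)) : ℕ) = s := by
        rw [h, valE_inl]
      have hq := hQ (posE n k (Sum.inr b))
      rw [posE_inr] at hq
      omega
  · intro hC i
    have hx : i = posE n k ((posE n k).symm i) := ((posE n k).apply_symm_apply i).symm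
    have hz : σ i = valE n k ((valE n k).symm (σ i)) :=
      ((valE n k).apply_symm_apply (σ i)).symm
    cases hc : (posE n k).symm i with
    | inl a =>
      have hi : (i : ℕ) = a := by rw [hx, hc, posE_inl]
      have han : (a : ℕ) < n := a.isLt
      cases hd : (valE n k).symm (σ i) with
      | inl s =>
        have hs : ((σ i : Fin (n+k)) : ℕ) = s := by rw [hz, hd, valE_inl]
        have hsk : (s : ℕ) < k := s.isLt
        omega
      | inr ℓ =>
        have hs : ((σ i : Fin (n+k)) : ℕ) = k + ℓ := by rw [hz, hd, valE_inr]
        have hle : (ℓ : ℕ) ≤ (a : ℕ) := by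
          apply hC.1 a ℓ
          rw [baseE_apply, ← hc, Equiv.apply_symm_apply]
          exact hd
        omega
    | inr b =>
      have hi : (i : ℕ) = n + b := by rw [hx, hc, posE_inr]
      have hbk : (b : ℕ) < k := b.isLt
      cases hd : (valE n k).symm (σ i) with
      | inl s =>
        have hs : ((σ i : Fin (n+k)) : ℕ) = s := by rw [hz, hd, valE_inl]
        have hle : (b : ℕ) ≤ (s : ℕ) := by
          apply hC.2 b s
          rw [baseE_apply, ← hc, Equiv.apply_symm_apply]
          exact hd
        omega
      | inr ℓ =>
        have hs : ((σ i : Fin (n+k)) : ℕ) = k + ℓ := by rw [hz, hd, valE_inr]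
        have hln : (ℓ : ℕ) < n := ℓ.isLt
        omega

end Veszt

/-- The permanent of the matrix `V` equals
`∑_{m=0}^{min(n,k)} m! S(n+1, m+1) m! S(k+1, m+1)`. -/
theorem permanent_vesztMatrix (n k : ℕ) :
    (∑ σ : Equiv.Perm (Fin (n + k)), ∏ i : Fin (n + k), vesztMatrix n k i (σ i))
      = ∑ m ∈ Finset.range (min n k + 1),
          m.factorial * stirling (n + 1) (m + 1) * m.factorial * stirling (k + 1) (m + 1) := by
  have step1 : ∀ σ : Equiv.Perm (Fin (n + k)),
      (∏ i : Fin (n+k), vesztMatrix n k i (σ i))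
        = if (∀ i : Fin (n+k), -(k : ℤ) ≤ (i : ℤ) - ((σ i : Fin (n+k)) : ℤ)
            ∧ (i : ℤ) - ((σ i : Fin (n+k)) : ℤ) ≤ (n : ℤ)) then 1 else 0 := by
    intro σ
    by_cases hq : ∀ i : Fin (n+k), -(k : ℤ) ≤ (i : ℤ) - ((σ i : Fin (n+k)) : ℤ)
        ∧ (i : ℤ) - ((σ i : Fin (n+k)) : ℤ) ≤ (n : ℤ)
    · rw [if_pos hq]
      apply Finset.prod_eq_one
      intro i _
      simp only [vesztMatrix]
      exact if_pos (hq i)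
    · rw [if_neg hq]
      rcases not_forall.mp hq with ⟨i0, hi0⟩
      apply Finset.prod_eq_zero (Finset.mem_univ i0)
      simp only [vesztMatrix]
      exact if_neg hi0
  rw [Finset.sum_congr rfl (fun σ _ => step1 σ), Finset.sum_boole, Nat.cast_id]
  have step2 : ((univ : Finset (Equiv.Perm (Fin (n+k)))).filter
      (fun σ : Equiv.Perm (Fin (n+k)) =>
        ∀ i : Fin (n+k), -(k : ℤ) ≤ (i : ℤ) - ((σ i : Fin (n+k)) : ℤ)
          ∧ (i : ℤ) - ((σ i : Fin (n+k)) : ℤ) ≤ (n : ℤ))).card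
      = ((univ : Finset ((Fin n ⊕ Fin k) ≃ (Fin k ⊕ Fin n))).filter Veszt.Cond).card := by
    apply Finset.card_bij (fun σ _ => Veszt.baseE n k σ)
    · intro σ hσ
      rw [Finset.mem_filter] at hσ ⊢
      exact ⟨Finset.mem_univ _, (Veszt.cond_iff n k σ).mp hσ.2⟩
    · intro σ _ σ' _ h
      exact (Veszt.baseE n k).injective h
    · intro τ hτ
      rw [Finset.mem_filter] at hτ
      refine ⟨(Veszt.baseE n k).symm τ, ?_, (Veszt.baseE n k).apply_symm_apply τ⟩
      rw [Finset.mem_filter]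
      refine ⟨Finset.mem_univ _, (Veszt.cond_iff n k _).mpr ?_⟩
      rw [(Veszt.baseE n k).apply_symm_apply]
      exact hτ.2
  rw [step2, Veszt.good_card n k]
  apply Finset.sum_congr rfl
  intro j _
  rw [Veszt.Pset_card, Veszt.Qset_card]
  ring
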